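/- Let ν ∈ ℂ and let u : ℝ → ℂ be twice differentiable. Define the Pauli matrices σ₁ = [[0,1],[1,0]], σ₂ = [[0,−i],[i,0]], σ₃ = [[1,0],[0,−1]], and set A := −4i·σ₃, B(x) := −4u(x)·σ₂, C(x) := −i(2u(x)² + x)·σ₃ − 2u′(x)·σ₁, D := ν·σ₂. For x ∈ ℝ and z ∈ ℂ \ {0} define L(x, z) := A z² + B(x) z + C(x) + D z⁻¹ and M(x, z) := −i z·σ₃ − u(x)·σ₂. Then the zero-curvature equation ∂_x L(x, z) − ∂_z M(x, z) + [L(x, z), M(x, z)] = 0 holds for all x ∈ ℝ and all z ≠ 0 if and only if u satisfies the Painlevé-II equation u″(x) − x·u(x) − 2u(x)³ = ν for all x ∈ ℝ. (This is the Lax representation of Painlevé II via the isomonodromy deformation of the rational connection (p3) with one irregular singularity, as in Example 2 of the paper.) -/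

import Mathlib

/-- Pauli matrix σ₁. -/
noncomputable def pauli1 : Matrix (Fin 2) (Fin 2) ℂ := !![0, 1; 1, 0]

/-- Pauli matrix σ₂. -/
noncomputable def pauli2 : Matrix (Fin 2) (Fin 2) ℂ := !![0, -Complex.I; Complex.I, 0]

/-- Pauli matrix σ₃. -/
noncomputable def pauli3 : Matrix (Fin 2) (Fin 2) ℂ := !![1, 0; 0, -1]

/-- The Lax matrix `L(x,z) = Az² + B(x)z + C(x) + Dz⁻¹` of the Painlevé-II isomonodromy
problem, with `A = −4iσ₃`, `B = −4uσ₂`, `C = −i(2u² + x)σ₃ − 2u′σ₁`, `D = νσ₂`. -/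
noncomputable def painleveL (ν : ℂ) (u : ℝ → ℂ) (x : ℝ) (z : ℂ) :
    Matrix (Fin 2) (Fin 2) ℂ :=
  z ^ 2 • ((-(4 * Complex.I)) • pauli3)
    + z • ((-(4 * u x)) • pauli2)
    + ((-(Complex.I * (2 * u x ^ 2 + (x : ℂ)))) • pauli3 + (-(2 * deriv u x)) • pauli1)
    + z⁻¹ • (ν • pauli2)

/-- The second Lax matrix `M(x,z) = −izσ₃ − u(x)σ₂`. -/
noncomputable def painleveM (u : ℝ → ℂ) (x : ℝ) (z : ℂ) : Matrix (Fin 2) (Fin 2) ℂ :=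
  (-(Complex.I * z)) • pauli3 + (-(u x)) • pauli2

lemma derivL_aux (ν : ℂ) (u : ℝ → ℂ) (hu : Differentiable ℝ u) (hu' : Differentiable ℝ (deriv u))
    (x : ℝ) (z : ℂ) (c1 c2 c3 : ℂ) :
    HasDerivAt (fun x' : ℝ => z ^ 2 * (-(4 * Complex.I) * c3)
      + z * (-(4 * u x') * c2)
      + ((-(Complex.I * (2 * u x' ^ 2 + (x' : ℂ)))) * c3 + (-(2 * deriv u x')) * c1)
      + z⁻¹ * (ν * c2))
      (z * (-(4 * deriv u x)) * c2 + (-(Complex.I * (4 * u x * deriv u x + 1))) * c3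
        + (-(2 * deriv (deriv u) x)) * c1) x := by
  have hux : HasDerivAt u (deriv u x) x := (hu x).hasDerivAt
  have hux' : HasDerivAt (deriv u) (deriv (deriv u) x) x := (hu' x).hasDerivAt
  have hre : HasDerivAt (fun x' : ℝ => (x' : ℂ)) 1 x := by
    simpa using (hasDerivAt_id x).ofReal_comp
  have h2 : HasDerivAt (fun x' : ℝ => z * (-(4 * u x') * c2))
      (z * (-(4 * deriv u x) * c2)) x :=
    (((hux.const_mul 4).neg.mul_const c2).const_mul z)
  have h3 : HasDerivAt (fun x' : ℝ => (-(Complex.I * (2 * u x' ^ 2 + (x' : ℂ)))) * c3)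
      ((-(Complex.I * (2 * (2 * u x * deriv u x) + 1))) * c3) x := by
    have hbase : HasDerivAt (fun x' : ℝ => 2 * u x' ^ 2 + (x' : ℂ))
        (2 * (2 * u x * deriv u x) + 1) x := by
      have hsq : HasDerivAt (fun x' : ℝ => u x' ^ 2) (2 * u x * deriv u x) x := by
        have := hux.mul hux; simp only [pow_two]; exact this.congr_deriv (by ring)
      exact (hsq.const_mul 2).add hre
    exact ((hbase.const_mul Complex.I).neg.mul_const c3)
  have h4 : HasDerivAt (fun x' : ℝ => (-(2 * deriv u x')) * c1)
      ((-(2 * deriv (deriv u) x)) * c1) x :=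
    ((hux'.const_mul 2).neg.mul_const c1)
  have := (((hasDerivAt_const x (z ^ 2 * (-(4 * Complex.I) * c3))).add h2).add (h3.add h4)).add
    (hasDerivAt_const x (z⁻¹ * (ν * c2)))
  exact this.congr_deriv (by ring)

lemma derivL_eq (ν : ℂ) (u : ℝ → ℂ) (hu : Differentiable ℝ u) (hu' : Differentiable ℝ (deriv u))
    (x : ℝ) (z : ℂ) (i j : Fin 2) :
    deriv (fun x' : ℝ => painleveL ν u x' z i j) x
      = z * (-(4 * deriv u x)) * pauli2 i j
        + (-(Complex.I * (4 * u x * deriv u x + 1))) * pauli3 i j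
        + (-(2 * deriv (deriv u) x)) * pauli1 i j := by
  have h := derivL_aux ν u hu hu' x z (pauli1 i j) (pauli2 i j) (pauli3 i j)
  have heq : (fun x' : ℝ => painleveL ν u x' z i j)
      = fun x' : ℝ => z ^ 2 * (-(4 * Complex.I) * pauli3 i j)
      + z * (-(4 * u x') * pauli2 i j)
      + ((-(Complex.I * (2 * u x' ^ 2 + (x' : ℂ)))) * pauli3 i j
        + (-(2 * deriv u x')) * pauli1 i j)
      + z⁻¹ * (ν * pauli2 i j) := by
    funext x'
    simp [painleveL, Matrix.add_apply, Matrix.smul_apply, smul_eq_mul, mul_assoc]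
  rw [heq]
  exact h.deriv

lemma derivM_eq (u : ℝ → ℂ) (x : ℝ) (z : ℂ) (i j : Fin 2) :
    deriv (fun z' : ℂ => painleveM u x z' i j) z = -Complex.I * pauli3 i j := by
  have hd : HasDerivAt (fun z' : ℂ => (-(Complex.I * z')) * pauli3 i j + (-(u x)) * pauli2 i j)
      (-Complex.I * pauli3 i j) z := by
    have h1 : HasDerivAt (fun z' : ℂ => Complex.I * z') Complex.I z := by
      simpa using (hasDerivAt_id z).const_mul Complex.I
    simpa using (h1.neg.mul_const (pauli3 i j)).add_const (-(u x) * pauli2 i j)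
  have heq : (fun z' : ℂ => painleveM u x z' i j)
      = fun z' : ℂ => (-(Complex.I * z')) * pauli3 i j + (-(u x)) * pauli2 i j := by
    funext z'
    simp [painleveM, Matrix.add_apply, Matrix.smul_apply, smul_eq_mul]
  rw [heq]
  exact hd.deriv

/-- Lax representation of Painlevé II (Example 2 of the paper): the zero-curvature
equation `∂_x L − ∂_z M + [L, M] = 0` holds for all `x ∈ ℝ`, `z ≠ 0` if and only if
`u″ − xu − 2u³ = ν`. -/
theorem stmt_10 (ν : ℂ) (u : ℝ → ℂ)
    (hu : Differentiable ℝ u) (hu' : Differentiable ℝ (deriv u)) :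
    (∀ (x : ℝ) (z : ℂ), z ≠ 0 →
      Matrix.of (fun i j => deriv (fun x' : ℝ => painleveL ν u x' z i j) x)
        - Matrix.of (fun i j => deriv (fun z' : ℂ => painleveM u x z' i j) z)
        + (painleveL ν u x z * painleveM u x z - painleveM u x z * painleveL ν u x z)
        = 0)
    ↔ (∀ x : ℝ, deriv (deriv u) x - (x : ℂ) * u x - 2 * u x ^ 3 = ν) := by
  constructor
  · intro h x
    have h1 := h x 1 one_ne_zero
    have h01 := congrFun (congrFun h1 0) 1
    simp only [Matrix.sub_apply, Matrix.add_apply, Matrix.of_apply,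
      derivL_eq ν u hu hu' x 1, derivM_eq u x 1] at h01
    simp only [Matrix.mul_apply, Fin.sum_univ_two, Matrix.add_apply, Matrix.of_apply,
      Matrix.zero_apply, painleveL, painleveM, Matrix.smul_apply, smul_eq_mul, Complex.I_sq,
      pauli1, pauli2, pauli3, Matrix.cons_val', Matrix.cons_val_zero, Matrix.cons_val_one,
      Matrix.head_cons, Matrix.empty_val', Matrix.cons_val_fin_one, Matrix.head_fin_const] at h01
    linear_combination (-1/2 : ℂ) * h01 + (-((x:ℂ) * u x + 2 * u x ^ 3 + ν)) * Complex.I_sq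
  · intro h x z hz
    have hP := h x
    ext i j
    fin_cases i <;> fin_cases j <;>
    · simp only [Matrix.sub_apply, Matrix.add_apply, Matrix.of_apply,
        derivL_eq ν u hu hu' x z, derivM_eq u x z]
      simp only [Matrix.mul_apply, Fin.sum_univ_two, Matrix.add_apply, Matrix.of_apply,
        Matrix.zero_apply, painleveL, painleveM, Matrix.smul_apply, smul_eq_mul, Complex.I_sq,
        pauli1, pauli2, pauli3, Matrix.cons_val', Matrix.cons_val_zero, Matrix.cons_val_one,
        Matrix.head_cons, Matrix.empty_val', Matrix.cons_val_fin_one, Matrix.head_fin_const,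
        Fin.zero_eta, Fin.mk_one]
      field_simp
      first
        | ring1
        | linear_combination ((-2 * z : ℂ) * hP + (-2 * z * ((x:ℂ) * u x + 2 * u x ^ 3 + ν)) * Complex.I_sq)
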